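/- Strict monotonicity of the expert summary in the non-minimal entry: assume conditions (N1), (Q1), (Q2). Then for every fixed u ∈ (0, C), the map v ↦ F(u, v) is strictly increasing on (0, C). -/

import Mathlib

/-- Logistic envelope `Φ₀(u) = log(1 + e^{-u})`. -/
noncomputable def Phi0 (u : ℝ) : ℝ := Real.log (1 + Real.exp (-u))

/-- Logistic envelope `Φ₁(u) = log(1 + e^{u})`. -/
noncomputable def Phi1 (u : ℝ) : ℝ := Real.log (1 + Real.exp u)

/-- Row objective `t ↦ ν(u)·G(t)·Φ₀(U(t)) + ν(v)·G(t)·Φ₁(U(t))`. -/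
noncomputable def rowObj (ν G U : ℝ → ℝ) (u v t : ℝ) : ℝ :=
  ν u * G t * Phi0 (U t) + ν v * G t * Phi1 (U t)

/-- Expert summary `F(u,v) = inf_t rowObj ν G U u v t`. -/
noncomputable def expertSummary (ν G U : ℝ → ℝ) (u v : ℝ) : ℝ :=
  ⨅ t : ℝ, rowObj ν G U u v t

/-- **Strict monotonicity of the expert summary in the non-minimal entry.**
Under (N1), (Q1), (Q2), for every fixed `u ∈ (0,C)` the map `v ↦ F(u,v)` is strictly
increasing on `(0,C)`. -/
theorem expert_summary_strict_mono
    (C : ℝ) (hC : 0 < C)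
    -- (N1)
    (ν ν' : ℝ → ℝ)
    (hνcont : ContinuousOn ν (Set.Icc 0 C))
    (hνpos : ∀ u ∈ Set.Icc 0 C, 0 < ν u)
    (hνderiv : ∀ u ∈ Set.Ioo 0 C, HasDerivAt ν (ν' u) u)
    (hν'pos : ∀ u ∈ Set.Ioo 0 C, 0 < ν' u)
    -- (Q1)
    (G U : ℝ → ℝ)
    (hGcont : Continuous G) (hGpos : ∀ t, 0 < G t)
    (hUcont : Continuous U) (hUmono : StrictMono U) (hUsurj : Function.Surjective U)
    -- (Q2)
    (hQ2 : ∀ u ∈ Set.Icc 0 C, ∀ v ∈ Set.Icc 0 C, ¬(u = 0 ∧ v = 0) →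
      Filter.Tendsto (fun t => rowObj ν G U u v t) (Filter.cocompact ℝ) Filter.atTop ∧
      StrictConvexOn ℝ Set.univ (fun t => rowObj ν G U u v t)) :
    ∀ u ∈ Set.Ioo (0 : ℝ) C,
      StrictMonoOn (fun v => expertSummary ν G U u v) (Set.Ioo 0 C) := by
  intro u hu v₁ hv₁ v₂ hv₂ hlt
  have huI : u ∈ Set.Icc 0 C := Set.mem_Icc_of_Ioo hu
  have hv₁I : v₁ ∈ Set.Icc 0 C := Set.mem_Icc_of_Ioo hv₁
  have hv₂I : v₂ ∈ Set.Icc 0 C := Set.mem_Icc_of_Ioo hv₂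
  -- ν is strictly increasing on [0,C]
  have hmono : StrictMonoOn ν (Set.Icc 0 C) := by
    apply strictMonoOn_of_deriv_pos (convex_Icc 0 C) hνcont
    intro x hx
    rw [interior_Icc] at hx
    rw [(hνderiv x hx).deriv]
    exact hν'pos x hx
  have hνlt : ν v₁ < ν v₂ := hmono hv₁I hv₂I hlt
  have hPhi0 : ∀ t : ℝ, 0 < Phi0 t := fun t =>
    Real.log_pos (by have := Real.exp_pos (-t); linarith)
  have hPhi1 : ∀ t : ℝ, 0 < Phi1 t := fun t =>
    Real.log_pos (by have := Real.exp_pos t; linarith)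
  have hpos : ∀ w ∈ Set.Icc (0:ℝ) C, ∀ t, 0 < rowObj ν G U u w t := by
    intro w hw t
    have h1 := hνpos u huI
    have h2 := hνpos w hw
    have h3 := hGpos t
    have h4 := hPhi0 (U t)
    have h5 := hPhi1 (U t)
    unfold rowObj
    positivity
  have hbdd : ∀ w ∈ Set.Icc (0:ℝ) C, BddBelow (Set.range fun t => rowObj ν G U u w t) := by
    intro w hw
    refine ⟨0, ?_⟩
    rintro _ ⟨t, rfl⟩
    exact (hpos w hw t).le
  -- continuity of the row objectives
  have hPhi0c : Continuous Phi0 := by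
    unfold Phi0
    exact (continuous_const.add (Real.continuous_exp.comp continuous_neg)).log
      (fun x => by have := Real.exp_pos (-x); show (1:ℝ) + Real.exp (-x) ≠ 0; positivity)
  have hPhi1c : Continuous Phi1 := by
    unfold Phi1
    exact (continuous_const.add Real.continuous_exp).log
      (fun x => by have := Real.exp_pos x; show (1:ℝ) + Real.exp x ≠ 0; positivity)
  have hcont : Continuous (fun t => rowObj ν G U u v₂ t) := by
    unfold rowObj
    exact ((continuous_const.mul hGcont).mul (hPhi0c.comp hUcont)).add
      ((continuous_const.mul hGcont).mul (hPhi1c.comp hUcont))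
  -- (Q2) coercivity gives a minimizer for the v₂ objective
  have hne : ¬(u = 0 ∧ v₂ = 0) := fun h => hu.1.ne' h.1
  obtain ⟨hcoer, -⟩ := hQ2 u huI v₂ hv₂I hne
  obtain ⟨t₀, ht₀⟩ := hcont.exists_forall_le hcoer
  have hF₂ : expertSummary ν G U u v₂ = rowObj ν G U u v₂ t₀ :=
    le_antisymm (ciInf_le (hbdd v₂ hv₂I) t₀) (le_ciInf ht₀)
  have hrowlt : rowObj ν G U u v₁ t₀ < rowObj ν G U u v₂ t₀ := by
    unfold rowObj
    have h3 := hGpos t₀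
    have h5 := hPhi1 (U t₀)
    have := mul_lt_mul_of_pos_right (mul_lt_mul_of_pos_right hνlt h3) h5
    linarith
  calc expertSummary ν G U u v₁ ≤ rowObj ν G U u v₁ t₀ := ciInf_le (hbdd v₁ hv₁I) t₀
    _ < rowObj ν G U u v₂ t₀ := hrowlt
    _ = expertSummary ν G U u v₂ := hF₂.symm
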